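/- arXiv:2112.04364 — 2 statements merged into one kernel-verified Lean document; each statement's English description precedes it below -/
import Mathlib

section
/- For α, β > 0, ∫₀^α √(log(1 + β/t)) dt ≤ α·Ψ(β/α), where Ψ(t) = √(log(1+t) + t(log(1+t) − log t)). -/
open MeasureTheory

lemma integrableOn_log_Ioc {a : ℝ} (ha : 0 < a) : IntegrableOn Real.log (Set.Ioc 0 a) := by
  have h1 : IntegrableOn (fun t : ℝ => t ^ (-(1/2):ℝ)) (Set.Ioc 0 a) := by
    have := intervalIntegral.intervalIntegrable_rpow' (a := 0) (b := a)
      (by norm_num : (-1:ℝ) < -(1/2))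
    rwa [intervalIntegrable_iff_integrableOn_Ioc_of_le ha.le] at this
  have hg : IntegrableOn (fun t : ℝ => 2 * t ^ (-(1/2) : ℝ) + |Real.log a|) (Set.Ioc 0 a) :=
    (h1.const_mul 2).add (integrableOn_const (by simp [Real.volume_Ioc]))
  refine Integrable.mono' hg (Real.measurable_log.aestronglyMeasurable) ?_
  rw [ae_restrict_iff' measurableSet_Ioc]
  refine Filter.Eventually.of_forall fun t ht => ?_
  obtain ⟨ht0, hta⟩ := ht
  rcases le_or_gt t 1 with h1t | h1t
  · have hlt : Real.log t ≤ 0 := Real.log_nonpos ht0.le h1t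
    rw [Real.norm_eq_abs, abs_of_nonpos hlt]
    have : -Real.log t = 2 * Real.log (t ^ (-(1/2):ℝ)) := by
      rw [Real.log_rpow ht0]; ring
    rw [this]
    have h2 : Real.log (t ^ (-(1/2):ℝ)) ≤ t ^ (-(1/2):ℝ) - 1 :=
      Real.log_le_sub_one_of_pos (Real.rpow_pos_of_pos ht0 _)
    have h3 : (0:ℝ) ≤ |Real.log a| := abs_nonneg _
    nlinarith [Real.rpow_pos_of_pos ht0 (-(1/2):ℝ)]
  · have hlt : 0 ≤ Real.log t := Real.log_nonneg h1t.le
    rw [Real.norm_eq_abs, abs_of_nonneg hlt]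
    have h2 : Real.log t ≤ Real.log a := Real.log_le_log ht0 hta
    have h3 : Real.log a ≤ |Real.log a| := le_abs_self _
    have h4 : (0:ℝ) ≤ 2 * t ^ (-(1/2):ℝ) := by positivity
    linarith

lemma integrableOn_f {α β : ℝ} (hα : 0 < α) (hβ : 0 < β) :
    IntegrableOn (fun t => Real.log (1 + β / t)) (Set.Ioc 0 α) := by
  have h1 : IntegrableOn (fun t : ℝ => Real.log (t + β)) (Set.Ioc 0 α) := by
    apply (ContinuousOn.integrableOn_compact isCompact_Icc ?_).mono_set Set.Ioc_subset_Icc_self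
    exact ContinuousOn.log (by fun_prop) fun t ht => by nlinarith [ht.1]
  refine IntegrableOn.congr_fun (h1.sub (integrableOn_log_Ioc hα)) (fun t ht => ?_)
    measurableSet_Ioc
  have ht0 : (0:ℝ) < t := ht.1
  simp only [Pi.sub_apply]
  rw [show (1:ℝ) + β / t = (t + β) / t by field_simp,
    Real.log_div (by positivity) (ne_of_gt ht0)]

lemma integral_f {α β : ℝ} (hα : 0 < α) (hβ : 0 < β) :
    ∫ t in Set.Ioc (0:ℝ) α, Real.log (1 + β / t)
      = (α + β) * Real.log (α + β) - α * Real.log α - β * Real.log β := by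
  set F : ℝ → ℝ := fun t => (t + β) * Real.log (t + β) - t * Real.log t with hF
  have hcont : Continuous F := by
    exact (Real.continuous_mul_log.comp (continuous_id.add continuous_const)).sub
      Real.continuous_mul_log
  have hderiv : ∀ t ∈ Set.Ioo (0:ℝ) α, HasDerivAt F (Real.log (1 + β / t)) t := by
    intro t ht
    have ht0 : (0:ℝ) < t := ht.1
    have h1 : HasDerivAt (fun t : ℝ => (t + β) * Real.log (t + β)) (Real.log (t + β) + 1) t := by
      have := (Real.hasDerivAt_mul_log (x := t + β) (by positivity)).comp t
        ((hasDerivAt_id t).add_const β)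
      simpa [Function.comp_def] using this
    have h2 : HasDerivAt (fun t : ℝ => t * Real.log t) (Real.log t + 1) t :=
      Real.hasDerivAt_mul_log (ne_of_gt ht0)
    have h3 := h1.sub h2
    have heq : Real.log (1 + β / t) = Real.log (t + β) - Real.log t := by
      rw [show (1:ℝ) + β / t = (t + β) / t by field_simp,
        Real.log_div (by positivity) (ne_of_gt ht0)]
    rw [heq]
    exact h3.congr_deriv (by ring)
  have hint : IntervalIntegrable (fun t => Real.log (1 + β / t)) volume 0 α := by
    rw [intervalIntegrable_iff_integrableOn_Ioc_of_le hα.le]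
    exact integrableOn_f hα hβ
  have key := intervalIntegral.integral_eq_sub_of_hasDeriv_right_of_le hα.le
    hcont.continuousOn (fun t ht => (hderiv t ht).hasDerivWithinAt) hint
  rw [intervalIntegral.integral_of_le hα.le] at key
  rw [key, hF]
  simp only
  ring

/-- `Ψ(t) = √(log(1+t) + t(log(1+t) − log t))`. -/
noncomputable def Psi (t : ℝ) : ℝ :=
  Real.sqrt (Real.log (1 + t) + t * (Real.log (1 + t) - Real.log t))

/-- For `α, β > 0`, `∫₀^α √(log(1 + β/t)) dt ≤ α·Ψ(β/α)`. -/
theorem integral_sqrt_log_le (α β : ℝ) (hα : 0 < α) (hβ : 0 < β) :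
    ∫ t in Set.Ioc (0 : ℝ) α, Real.sqrt (Real.log (1 + β / t)) ≤ α * Psi (β / α) := by
  set μ := volume.restrict (Set.Ioc (0:ℝ) α) with hμ
  set f : ℝ → ℝ := fun t => Real.sqrt (Real.log (1 + β / t)) with hf
  set I : ℝ := (α + β) * Real.log (α + β) - α * Real.log α - β * Real.log β with hI
  have hfin : IsFiniteMeasure μ := by
    constructor
    rw [hμ, Measure.restrict_apply_univ, Real.volume_Ioc]
    exact ENNReal.ofReal_lt_top
  -- f is nonneg; f^2 = log(1+β/t) a.e.
  have hlog_nonneg : ∀ t ∈ Set.Ioc (0:ℝ) α, 0 ≤ Real.log (1 + β / t) := fun t ht =>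
    Real.log_nonneg (by nlinarith [div_pos hβ ht.1])
  have hsq : ∀ᵐ t ∂μ, f t ^ (2:ℝ) = Real.log (1 + β / t) := by
    rw [hμ, ae_restrict_iff' measurableSet_Ioc]
    refine Filter.Eventually.of_forall fun t ht => ?_
    rw [hf]
    rw [show ((2:ℝ)) = ((2:ℕ):ℝ) by norm_num, Real.rpow_natCast]
    exact Real.sq_sqrt (hlog_nonneg t ht)
  have hmeas : AEStronglyMeasurable f μ := by
    apply Measurable.aestronglyMeasurable
    exact Real.continuous_sqrt.measurable.comp
      (Real.measurable_log.comp (measurable_const.add (measurable_const.div measurable_id)))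
  have hint_log : Integrable (fun t => Real.log (1 + β / t)) μ := integrableOn_f hα hβ
  have hmem : MemLp f 2 μ := by
    rw [memLp_two_iff_integrable_sq hmeas]
    refine hint_log.congr ?_
    filter_upwards [hsq] with t ht
    rw [← ht, show ((2:ℝ)) = ((2:ℕ):ℝ) by norm_num, Real.rpow_natCast]
  have hf_nonneg : 0 ≤ᵐ[μ] f := Filter.Eventually.of_forall fun t => Real.sqrt_nonneg _
  have hone : MemLp (fun _ : ℝ => (1:ℝ)) 2 μ := memLp_const 1
  have hpq : (2:ℝ).HolderConjugate 2 := Real.holderConjugate_iff.2 ⟨one_lt_two, by norm_num⟩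
  have holder := integral_mul_le_Lp_mul_Lq_of_nonneg (μ := μ) hpq hf_nonneg
    (Filter.Eventually.of_forall fun t => zero_le_one) (by simpa using hmem) (by simpa using hone)
  simp only [mul_one] at holder
  -- compute the two integrals on the RHS
  have hIsq : ∫ t, f t ^ (2:ℝ) ∂μ = I := by
    rw [integral_congr_ae hsq, hμ, hI, integral_f hα hβ]
  have hone_int : ∫ _ : ℝ, (1:ℝ) ^ (2:ℝ) ∂μ = α := by
    simp [hμ, Real.volume_Ioc, hα.le]
  rw [hIsq, hone_int] at holder
  refine holder.trans (le_of_eq ?_)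
  -- algebra: I^(1/2) * α^(1/2) = α * Psi (β/α)
  have hI_nonneg : 0 ≤ I := by
    rw [hI, ← integral_f hα hβ]
    exact setIntegral_nonneg measurableSet_Ioc hlog_nonneg
  have hlog1 : Real.log (1 + β / α) = Real.log (α + β) - Real.log α := by
    rw [show (1:ℝ) + β / α = (α + β) / α by field_simp,
      Real.log_div (by positivity) (ne_of_gt hα)]
  have hlog2 : Real.log (β / α) = Real.log β - Real.log α :=
    Real.log_div (ne_of_gt hβ) (ne_of_gt hα)
  have key : α * (Real.log (1 + β / α) + (β / α) * (Real.log (1 + β / α) - Real.log (β / α)))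
      = I := by
    rw [hlog1, hlog2, hI]
    field_simp
    ring
  rw [Psi, ← Real.sqrt_eq_rpow, ← Real.sqrt_eq_rpow, ← Real.sqrt_mul hI_nonneg,
    show α * Real.sqrt (Real.log (1 + β / α) + (β/α) * (Real.log (1 + β / α) - Real.log (β/α)))
      = Real.sqrt (α^2 * (Real.log (1 + β / α) + (β/α) * (Real.log (1 + β / α) - Real.log (β/α))))
      from by rw [Real.sqrt_mul (by positivity), Real.sqrt_sq hα.le]]
  congr 1
  nlinarith [key]
end

section
/- With f^l as in the iterative soft thresholding network, if ‖B_k‖_{2→2} ≤ B_∞, τ_k ≤ τ_∞, and ‖I − τ_{i} B_{i}ᵀ B_{i}‖_{2→2} ≤ α for all indices, then ‖f^l(y)‖₂ ≤ ‖y‖₂ · τ_∞ B_∞ · Σ_{k=1}^{l} α^{l−k}. In particular, if α ≤ 1 then ‖f^l(y)‖₂ ≤ l·τ_∞·B_∞·‖y‖₂. -/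
open ContinuousLinearMap

noncomputable abbrev E (k : ℕ) : Type := EuclideanSpace ℝ (Fin k)

/-- The iterates `f^l(y)` of a soft-thresholding network (0-based layer index:
`B k`, `τ k`, `S k`, `P k` are the data of layer `k+1`):
`f^0(y) = 0` and
`f^{l+1}(y) = P_l (S_l ((I − τ_l B_lᵀB_l) f^l(y) + τ_l B_lᵀ y))`. -/
noncomputable def netIter (d : ℕ → ℕ) (n : ℕ)
    (B : ∀ k, E (d k) →L[ℝ] E n) (τ : ℕ → ℝ)
    (S : ∀ k, E (d k) → E (d k)) (P : ∀ k, E (d k) → E (d (k + 1)))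
    (y : E n) : ∀ l, E (d l)
  | 0 => 0
  | l + 1 =>
      P l (S l ((ContinuousLinearMap.id ℝ (E (d l)) -
          τ l • ((ContinuousLinearMap.adjoint (B l)).comp (B l)))
          (netIter d n B τ S P y l) + τ l • (ContinuousLinearMap.adjoint (B l)) y))

/-- If `‖B_k‖ ≤ B_∞`, `τ_k ≤ τ_∞` and `‖I − τ_i B_iᵀB_i‖ ≤ α` for all indices,
then `‖f^l(y)‖ ≤ ‖y‖ · τ_∞ B_∞ · Σ_{k=1}^{l} α^{l−k}`; in particular, if
`α ≤ 1` then `‖f^l(y)‖ ≤ l·τ_∞·B_∞·‖y‖`. -/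
theorem netIter_norm_le_geom (d : ℕ → ℕ) (n : ℕ)
    (B : ∀ k, E (d k) →L[ℝ] E n) (τ lam : ℕ → ℝ)
    (S : ∀ k, E (d k) → E (d k)) (P : ∀ k, E (d k) → E (d (k + 1)))
    (Binf τinf α : ℝ) (hBinf : 0 ≤ Binf) (hτinf : 0 ≤ τinf) (hα : 0 ≤ α)
    (hτ : ∀ k, 0 < τ k) (hlam : ∀ k, 0 < lam k)
    (hS : ∀ k z, ‖S k z‖ ≤ ‖z‖) (hP : ∀ k z, ‖P k z‖ ≤ ‖z‖)
    (hB : ∀ k, ‖B k‖ ≤ Binf) (hτ' : ∀ k, τ k ≤ τinf)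
    (hI : ∀ i, ‖ContinuousLinearMap.id ℝ (E (d i)) -
        τ i • ((ContinuousLinearMap.adjoint (B i)).comp (B i))‖ ≤ α)
    (y : E n) (l : ℕ) :
    ‖netIter d n B τ S P y l‖ ≤ ‖y‖ * (τinf * Binf * ∑ k ∈ Finset.range l, α ^ k) ∧
      (α ≤ 1 → ‖netIter d n B τ S P y l‖ ≤ l * τinf * Binf * ‖y‖) := by

  have main : ‖netIter d n B τ S P y l‖ ≤
      ‖y‖ * (τinf * Binf * ∑ k ∈ Finset.range l, α ^ k) := by
    induction l with
    | zero => simp [netIter]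
    | succ l ih =>
      have hstep : ‖netIter d n B τ S P y (l + 1)‖ ≤
          α * ‖netIter d n B τ S P y l‖ + τinf * Binf * ‖y‖ := by
        rw [netIter]
        refine (hP _ _).trans ((hS _ _).trans ?_)
        refine (norm_add_le _ _).trans (add_le_add ?_ ?_)
        · refine (le_opNorm _ _).trans ?_
          exact mul_le_mul_of_nonneg_right (hI l) (norm_nonneg _)
        · rw [norm_smul, Real.norm_eq_abs, abs_of_pos (hτ l)]
          have h1 : ‖(ContinuousLinearMap.adjoint (B l)) y‖ ≤ Binf * ‖y‖ := by
            refine (le_opNorm _ _).trans ?_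
            rw [LinearIsometryEquiv.norm_map ContinuousLinearMap.adjoint (B l)]
            exact mul_le_mul_of_nonneg_right (hB l) (norm_nonneg _)
          have := mul_le_mul (hτ' l) h1 (norm_nonneg _) hτinf
          linarith
      refine hstep.trans ?_
      have h2 : α * ‖netIter d n B τ S P y l‖ ≤
          α * (‖y‖ * (τinf * Binf * ∑ k ∈ Finset.range l, α ^ k)) :=
        mul_le_mul_of_nonneg_left ih hα
      refine (add_le_add_left h2 _).trans_eq ?_
      rw [geom_sum_succ]
      ring
  refine ⟨main, fun hα1 => ?_⟩
  refine main.trans ?_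
  have hsum : ∑ k ∈ Finset.range l, α ^ k ≤ l := by
    calc ∑ k ∈ Finset.range l, α ^ k ≤ ∑ k ∈ Finset.range l, 1 :=
        Finset.sum_le_sum fun k _ => pow_le_one₀ hα hα1
    _ = l := by simp
  calc ‖y‖ * (τinf * Binf * ∑ k ∈ Finset.range l, α ^ k)
      ≤ ‖y‖ * (τinf * Binf * l) := by
        apply mul_le_mul_of_nonneg_left _ (norm_nonneg _)
        exact mul_le_mul_of_nonneg_left hsum (by positivity)
  _ = l * τinf * Binf * ‖y‖ := by ring
end
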